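/- arXiv:2007.02618 — 2 statements merged into one kernel-verified Lean document; each statement's English description precedes it below -/
import Mathlib

section
/- Let A ∈ ℝ^{n×n} be a nonnegative hollow tridiagonal matrix, i.e., A_{ii} = 0 for all i and A_{ij} = 0 when |i−j| > 1, such that A_{i,i+1}·A_{i+1,i} = 0 for every i ∈ {1,…,n−1}, and A_{i,i+1} > 0 for at least one i. Then Levinger's function r(t) := ρ((1−t)A + tAᵀ) is strictly concave on t ∈ (0,1). -/
open Matrix

/-- The spectral radius of a real square matrix: the maximum modulus of its
(complex) eigenvalues. -/
noncomputable def specRad {m : Type*} [Fintype m] [DecidableEq m]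
    (M : Matrix m m ℝ) : ℝ :=
  (spectralRadius ℂ (M.map (fun x : ℝ => (x : ℂ)))).toReal

/-- A square matrix is irreducible if its associated directed graph is strongly
connected, i.e. for every pair of indices `i j` some power of the matrix has a
positive `(i,j)` entry. -/
def Irred {m : Type*} [Fintype m] [DecidableEq m] (M : Matrix m m ℝ) : Prop :=
  ∀ i j : m, ∃ k : ℕ, 0 < (M ^ (k + 1)) i j

open scoped Pointwise

section aux
variable {m : Type*} [Fintype m] [DecidableEq m]

lemma spectralRadius_matrix_zero : spectralRadius ℂ (0 : Matrix m m ℂ) = 0 := by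
  rw [spectralRadius]
  refine le_antisymm ?_ zero_le
  refine iSup₂_le fun k hk => ?_
  have hk0 : k = 0 := by
    by_contra h
    rw [spectrum.mem_iff, sub_zero] at hk
    exact hk ((Ne.isUnit h).map (algebraMap ℂ (Matrix m m ℂ)))
  simp [hk0]

lemma specRad_smul (c : ℝ) (hc : 0 ≤ c) (M : Matrix m m ℝ) :
    specRad (c • M) = c * specRad M := by
  rcases eq_or_lt_of_le hc with h | h
  · subst h
    simp only [zero_smul, specRad]
    have : (0 : Matrix m m ℝ).map (fun x : ℝ => (x : ℂ)) = 0 := by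
      ext i j; simp
    rw [this, spectralRadius_matrix_zero]
    simp
  · have hmap : (c • M).map (fun x : ℝ => (x : ℂ))
        = (c : ℂ) • M.map (fun x : ℝ => (x : ℂ)) := by
      ext i j; simp [Matrix.map_apply]
    set a := M.map (fun x : ℝ => (x : ℂ)) with ha
    have hcne : (c : ℂ) ≠ 0 := by exact_mod_cast h.ne'
    set u : ℂˣ := Units.mk0 (c : ℂ) hcne with hu
    have hspec : spectrum ℂ ((c : ℂ) • a) = u • spectrum ℂ a := by
      rw [show (c:ℂ) • a = u • a from rfl, spectrum.unit_smul_eq_smul]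
    have key : spectralRadius ℂ ((c:ℂ) • a) = (‖(c:ℂ)‖₊ : ENNReal) * spectralRadius ℂ a := by
      rw [spectralRadius, spectralRadius, hspec]
      rw [show (u • spectrum ℂ a) = (fun x : ℂ => (c:ℂ) * x) '' spectrum ℂ a by
        ext z
        simp only [Set.mem_smul_set, Set.mem_image, hu, Units.smul_def, Units.val_mk0,
          smul_eq_mul]]
      rw [iSup_image, ENNReal.mul_iSup]
      congr 1; ext k
      rw [ENNReal.mul_iSup]
      congr 1; ext hk
      rw [← ENNReal.coe_mul, nnnorm_mul]
    rw [specRad, specRad, hmap, key, ENNReal.toReal_mul]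
    congr 1
    simp only [ENNReal.coe_toReal, coe_nnnorm, Complex.norm_real, Real.norm_eq_abs,
      abs_of_nonneg hc]

end aux

section conj
variable {m : Type*} [Fintype m] [DecidableEq m]

lemma specRad_conj (d : m → ℝ) (hd : ∀ i, d i ≠ 0) (B C : Matrix m m ℝ)
    (h : B * Matrix.diagonal d = Matrix.diagonal d * C) : specRad B = specRad C := by
  have hmap : ∀ M : Matrix m m ℝ, M.map (fun x : ℝ => (x : ℂ)) = M.map Complex.ofRealHom := by
    intro M; rfl
  set f := Complex.ofRealHom
  set dC : m → ℂ := fun i => (d i : ℂ) with hdC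
  have hdCne : ∀ i, dC i ≠ 0 := fun i => by
    simpa [hdC] using hd i
  have hval : Matrix.diagonal dC * Matrix.diagonal (fun i => (dC i)⁻¹) = 1 := by
    rw [Matrix.diagonal_mul_diagonal]
    rw [show (fun i => dC i * (dC i)⁻¹) = fun _ => (1:ℂ) by
      funext i; exact mul_inv_cancel₀ (hdCne i)]
    exact Matrix.diagonal_one
  have hval' : Matrix.diagonal (fun i => (dC i)⁻¹) * Matrix.diagonal dC = 1 := by
    rw [Matrix.diagonal_mul_diagonal]
    rw [show (fun i => (dC i)⁻¹ * dC i) = fun _ => (1:ℂ) by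
      funext i; exact inv_mul_cancel₀ (hdCne i)]
    exact Matrix.diagonal_one
  set u : (Matrix m m ℂ)ˣ := ⟨Matrix.diagonal dC, Matrix.diagonal (fun i => (dC i)⁻¹),
    hval, hval'⟩ with hu
  have hmul : B.map f * Matrix.diagonal dC = Matrix.diagonal dC * C.map f := by
    have := congrArg (Matrix.map · f) h
    simp [Matrix.map_mul, Matrix.diagonal_map, Function.comp] at this
    exact this
  have hconj : B.map f = (u : Matrix m m ℂ) * C.map f * ((u⁻¹ : (Matrix m m ℂ)ˣ) : Matrix m m ℂ) := by
    have h1 : B.map f * (u : Matrix m m ℂ) = (u : Matrix m m ℂ) * C.map f := hmul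
    calc B.map f = B.map f * ((u : Matrix m m ℂ) * ((u⁻¹ : (Matrix m m ℂ)ˣ) : Matrix m m ℂ)) := by
          rw [Units.mul_inv, mul_one]
    _ = (B.map f * (u : Matrix m m ℂ)) * ((u⁻¹ : (Matrix m m ℂ)ˣ) : Matrix m m ℂ) := by
          rw [mul_assoc]
    _ = (u : Matrix m m ℂ) * C.map f * ((u⁻¹ : (Matrix m m ℂ)ˣ) : Matrix m m ℂ) := by rw [h1]
  have hspec : spectrum ℂ (B.map f) = spectrum ℂ (C.map f) := by
    rw [hconj]; exact spectrum.units_conjugate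
  rw [specRad, specRad, hmap, hmap, spectralRadius, spectralRadius, hspec]

end conj

section pos
variable {m : Type*} [Fintype m] [DecidableEq m]
open scoped Matrix.Norms.L2Operator

lemma specRad_pos_of_symm (M : Matrix m m ℝ) (hsymm : Mᵀ = M) (hne : M ≠ 0) :
    0 < specRad M := by
  letI : CStarAlgebra (Matrix m m ℂ) := {}
  have hsa : _root_.IsSelfAdjoint (M.map (fun x : ℝ => (x : ℂ))) := by
    show star _ = _
    rw [Matrix.star_eq_conjTranspose]
    ext i j
    simp only [Matrix.conjTranspose_apply, Matrix.map_apply, RCLike.star_def,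
      Complex.conj_ofReal]
    exact_mod_cast congrFun (congrFun hsymm i) j
  rw [specRad, hsa.toReal_spectralRadius_complex_eq_norm]
  rw [norm_pos_iff]
  intro h0
  apply hne
  ext i j
  have := congrFun (congrFun h0 i) j
  simpa using this

end pos

set_option maxHeartbeats 1000000 in
/-- Levinger's function of a nonnegative hollow tridiagonal matrix in which at
most one of each transposed pair `A_{i,i+1}, A_{i+1,i}` is nonzero, and at
least one superdiagonal entry is positive, is strictly concave on `(0,1)`. -/
theorem levinger_hollow_tridiagonal_strictConcave {n : ℕ}
    (A : Matrix (Fin n) (Fin n) ℝ)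
    (hnn : ∀ i j, 0 ≤ A i j)
    (hhollow : ∀ i : Fin n, A i i = 0)
    (htri : ∀ i j : Fin n,
      (j:ℕ) ≠ (i:ℕ) + 1 → (i:ℕ) ≠ (j:ℕ) + 1 → (i:ℕ) ≠ (j:ℕ) → A i j = 0)
    (hswap : ∀ i j : Fin n, (j:ℕ) = (i:ℕ) + 1 → A i j * A j i = 0)
    (hpos : ∃ i j : Fin n, (j:ℕ) = (i:ℕ) + 1 ∧ 0 < A i j) :
    StrictConcaveOn ℝ (Set.Ioo (0:ℝ) 1)
      (fun t : ℝ => specRad ((1 - t) • A + t • Aᵀ)) := by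
  set S : Matrix (Fin n) (Fin n) ℝ := A + Aᵀ with hS
  set K : ℝ := specRad S with hK
  -- K is positive
  have hSsymm : Sᵀ = S := by
    rw [hS, Matrix.transpose_add, Matrix.transpose_transpose, add_comm]
  have hSne : S ≠ 0 := by
    obtain ⟨i, j, hij, hA⟩ := hpos
    intro h
    have h0 : S i j = 0 := by rw [h]; rfl
    have : A i j + A j i = 0 := by
      simpa [hS, Matrix.add_apply, Matrix.transpose_apply] using h0
    nlinarith [hnn j i]
  have hKpos : 0 < K := specRad_pos_of_symm S hSsymm hSne
  -- the key scaling identity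
  have key : ∀ t : ℝ, t ∈ Set.Ioo (0:ℝ) 1 →
      specRad ((1 - t) • A + t • Aᵀ) = Real.sqrt (t * (1 - t)) * K := by
    intro t ht
    obtain ⟨ht0, ht1⟩ := ht
    have ht1' : 0 < 1 - t := by linarith
    set c : ℝ := Real.sqrt (t * (1 - t)) with hc
    have htt : 0 < t * (1 - t) := mul_pos ht0 ht1'
    have hcpos : 0 < c := Real.sqrt_pos.mpr htt
    have hc2 : c ^ 2 = t * (1 - t) := Real.sq_sqrt htt.le
    -- the scaling ratios
    set ratio : ℕ → ℝ := fun k =>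
      if h : k + 1 < n then
        (if 0 < A ⟨k, Nat.lt_of_succ_lt h⟩ ⟨k+1, h⟩ + A ⟨k+1, h⟩ ⟨k, Nat.lt_of_succ_lt h⟩ then
          c * (A ⟨k, Nat.lt_of_succ_lt h⟩ ⟨k+1, h⟩ + A ⟨k+1, h⟩ ⟨k, Nat.lt_of_succ_lt h⟩) /
            ((1-t) * A ⟨k, Nat.lt_of_succ_lt h⟩ ⟨k+1, h⟩ + t * A ⟨k+1, h⟩ ⟨k, Nat.lt_of_succ_lt h⟩)
        else 1)
      else 1 with hratio
    have hratio_pos : ∀ k, 0 < ratio k := by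
      intro k
      simp only [hratio]
      split_ifs with h h'
      · have ha : (0:ℝ) ≤ A ⟨k, Nat.lt_of_succ_lt h⟩ ⟨k+1, h⟩ := hnn _ _
        have hb : (0:ℝ) ≤ A ⟨k+1, h⟩ ⟨k, Nat.lt_of_succ_lt h⟩ := hnn _ _
        have hden : 0 < (1-t) * A ⟨k, Nat.lt_of_succ_lt h⟩ ⟨k+1, h⟩
            + t * A ⟨k+1, h⟩ ⟨k, Nat.lt_of_succ_lt h⟩ := by
          rcases lt_or_eq_of_le ha with h1 | h1
          · nlinarith
          · nlinarith
        exact div_pos (by nlinarith) hden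
      · exact one_pos
      · exact one_pos
    set d : Fin n → ℝ := fun i => ∏ k ∈ Finset.range i.val, ratio k with hd
    have hdpos : ∀ i, 0 < d i := fun i =>
      Finset.prod_pos fun k _ => hratio_pos k
    have hdne : ∀ i, d i ≠ 0 := fun i => (hdpos i).ne'
    have hdsucc : ∀ (i j : Fin n), (j:ℕ) = (i:ℕ) + 1 → d j = d i * ratio i.val := by
      intro i j hij
      simp only [hd]
      rw [hij, Finset.prod_range_succ]
    -- the matrix identity
    have hmat : ((1 - t) • A + t • Aᵀ) * Matrix.diagonal d
        = Matrix.diagonal d * (c • S) := by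
      ext i j
      rw [Matrix.mul_diagonal, Matrix.diagonal_mul]
      simp only [Matrix.add_apply, Matrix.smul_apply, Matrix.transpose_apply, hS,
        smul_eq_mul]
      rcases Nat.lt_trichotomy ((i:ℕ)+1) (j:ℕ) with hlt | heq | hgt
      · -- j > i + 1 : zero entries
        have h1 : A i j = 0 := htri i j (by omega) (by omega) (by omega)
        have h2 : A j i = 0 := htri j i (by omega) (by omega) (by omega)
        rw [h1, h2]; ring
      · -- j = i + 1 : superdiagonal
        have hjlt : (i:ℕ) + 1 < n := heq ▸ j.isLt
        have hieq : i = ⟨(i:ℕ), Nat.lt_of_succ_lt hjlt⟩ := Fin.ext rfl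
        have hjeq : j = ⟨(i:ℕ)+1, hjlt⟩ := Fin.ext (by simpa using heq.symm)
        have hdj : d j = d i * ratio i.val := hdsucc i j heq.symm
        have hann : (0:ℝ) ≤ A i j := hnn i j
        have hbnn : (0:ℝ) ≤ A j i := hnn j i
        have hra : ratio i.val
            = if 0 < A i j + A j i then
                c * (A i j + A j i) / ((1-t) * A i j + t * A j i) else 1 := by
          simp only [hratio]
          rw [dif_pos hjlt, ← hieq, ← hjeq]
        by_cases hab : 0 < A i j + A j i
        · have hden : 0 < (1-t) * A i j + t * A j i := by
            rcases lt_or_eq_of_le hann with h1 | h1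
            · nlinarith
            · nlinarith
          rw [hdj, hra, if_pos hab]
          have hcan : ((1-t) * A i j + t * A j i) *
              (c * (A i j + A j i) / ((1-t) * A i j + t * A j i)) = c * (A i j + A j i) := by
            field_simp
          linear_combination d i * hcan
        · have ha0 : A i j = 0 := by nlinarith
          have hb0 : A j i = 0 := by nlinarith
          rw [ha0, hb0]; ring
      · rcases Nat.lt_trichotomy ((j:ℕ)+1) (i:ℕ) with hlt2 | heq2 | hgt2
        · have h1 : A i j = 0 := htri i j (by omega) (by omega) (by omega)
          have h2 : A j i = 0 := htri j i (by omega) (by omega) (by omega)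
          rw [h1, h2]; ring
        · -- i = j + 1 : subdiagonal
          have hilt : (j:ℕ) + 1 < n := heq2 ▸ i.isLt
          have hjeq : j = ⟨(j:ℕ), Nat.lt_of_succ_lt hilt⟩ := Fin.ext rfl
          have hieq : i = ⟨(j:ℕ)+1, hilt⟩ := Fin.ext (by simpa using heq2.symm)
          have hdi : d i = d j * ratio j.val := hdsucc j i heq2.symm
          have hann : (0:ℝ) ≤ A j i := hnn j i
          have hbnn : (0:ℝ) ≤ A i j := hnn i j
          have habz : A j i * A i j = 0 := hswap j i heq2.symm
          have hra : ratio j.val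
              = if 0 < A j i + A i j then
                  c * (A j i + A i j) / ((1-t) * A j i + t * A i j) else 1 := by
            simp only [hratio]
            rw [dif_pos hilt, ← hjeq, ← hieq]
          by_cases hab : 0 < A j i + A i j
          · have hden : 0 < (1-t) * A j i + t * A i j := by
              rcases lt_or_eq_of_le hann with h1 | h1
              · nlinarith
              · nlinarith
            rw [hdi, hra, if_pos hab]
            have hid : ((1-t) * A i j + t * A j i) * ((1-t) * A j i + t * A i j)
                = (c * (A j i + A i j)) * (c * (A j i + A i j)) := by
              have : c^2 * (A j i + A i j)^2
                  = (c * (A j i + A i j)) * (c * (A j i + A i j)) := by ring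
              rw [← this, hc2]
              linear_combination ((1 - 2*t)^2) * habz
            have hrhs : d j * (c * (A j i + A i j) / ((1-t) * A j i + t * A i j))
                * (c * (A i j + A j i))
                = d j * ((c * (A j i + A i j)) * (c * (A i j + A j i)))
                  / ((1-t) * A j i + t * A i j) := by
              ring
            rw [hrhs, eq_comm, div_eq_iff hden.ne']
            linear_combination (-(d j)) * hid
          · have ha0 : A j i = 0 := by nlinarith
            have hb0 : A i j = 0 := by nlinarith
            rw [ha0, hb0]; ring
        · -- i = j : diagonal
          have hij : i = j := Fin.ext (by omega)
          subst hij
          rw [hhollow i]; ring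
    have hconj := specRad_conj d hdne ((1 - t) • A + t • Aᵀ) (c • S) hmat
    rw [hconj, specRad_smul c hcpos.le S]
  -- now deduce strict concavity
  refine ⟨convex_Ioo 0 1, ?_⟩
  intro x hx y hy hxy a b ha hb hab
  have hzmem : a * x + b * y ∈ Set.Ioo (0:ℝ) 1 := by
    simpa using (convex_Ioo (0:ℝ) 1) hx hy ha.le hb.le hab
  simp only [smul_eq_mul]
  rw [key x hx, key y hy, key _ hzmem]
  obtain ⟨hx0, hx1⟩ := hx
  obtain ⟨hy0, hy1⟩ := hy
  obtain ⟨hz0, hz1⟩ := hzmem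
  set p : ℝ := x * (1 - x) with hp
  set q : ℝ := y * (1 - y) with hq
  have hppos : 0 < p := mul_pos hx0 (by linarith)
  have hqpos : 0 < q := mul_pos hy0 (by linarith)
  set sp : ℝ := Real.sqrt p with hsp
  set sq : ℝ := Real.sqrt q with hsq
  have hsp2 : sp ^ 2 = p := Real.sq_sqrt hppos.le
  have hsq2 : sq ^ 2 = q := Real.sq_sqrt hqpos.le
  have hspn : 0 ≤ sp := Real.sqrt_nonneg _
  have hsqn : 0 ≤ sq := Real.sqrt_nonneg _
  have hw : 0 ≤ a * sp + b * sq := by positivity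
  have e1 : a * p + b * q - (a * sp + b * sq) ^ 2 = a * b * (sp - sq) ^ 2 := by
    rw [← hsp2, ← hsq2]
    linear_combination (-(a * sp^2 + b * sq^2)) * hab
  have h1 : (a * sp + b * sq) ^ 2 ≤ a * p + b * q := by
    linarith [e1, mul_nonneg (mul_nonneg ha.le hb.le) (sq_nonneg (sp - sq))]
  have hxyne : x - y ≠ 0 := sub_ne_zero.mpr hxy
  have hxy2 : 0 < (x - y)^2 := by positivity
  have e2 : (a * x + b * y) * (1 - (a * x + b * y)) - (a * p + b * q)
      = a * b * (x - y) ^ 2 := by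
    rw [hp, hq]
    linear_combination (-(a * x^2 + b * y^2)) * hab
  have h2 : a * p + b * q < (a * x + b * y) * (1 - (a * x + b * y)) := by
    linarith [e2, mul_pos (mul_pos ha hb) hxy2]
  have h3 : a * sp + b * sq < Real.sqrt ((a * x + b * y) * (1 - (a * x + b * y))) := by
    rw [Real.lt_sqrt hw]
    exact lt_of_le_of_lt h1 h2
  calc a * (sp * K) + b * (sq * K) = (a * sp + b * sq) * K := by ring
  _ < Real.sqrt ((a * x + b * y) * (1 - (a * x + b * y))) * K :=
      mul_lt_mul_of_pos_right h3 hKpos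
end

section
/- Let S ∈ ℝ^{n×n} be a nonnegative irreducible symmetric matrix and K ∈ ℝ^{n×n} a skew-symmetric matrix such that A := S + K is nonnegative. Let Q be an orthogonal matrix diagonalizing S, QᵀSQ = diag(ρ(S), λ₂, …, λ_n), with the first column of Q equal to the Perron vector of S. Then Levinger's function t ↦ ρ((1−t)A + tAᵀ) is constant on [0,1] if and only if K₁ := QᵀKQ has its first row and first column entirely zero, i.e., K₁ = [0] ⊕ K₂ for some skew-symmetric K₂ ∈ ℝ^{(n−1)×(n−1)}. -/
open Matrix

section LevingerAux

variable {n : ℕ}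

private lemma cmap_mulVec (M : Matrix (Fin n) (Fin n) ℝ) (v : Fin n → ℝ) :
    (M.map (fun a : ℝ => (a : ℂ))) *ᵥ (fun i => (v i : ℂ)) = fun i => ((M *ᵥ v) i : ℂ) := by
  funext i
  simp only [Matrix.mulVec, dotProduct, Matrix.map_apply]
  push_cast
  rfl

private lemma mem_spectrum_of_eig {M : Matrix (Fin n) (Fin n) ℂ} {μ : ℂ} {z : Fin n → ℂ}
    (hz : z ≠ 0) (h : M *ᵥ z = μ • z) : μ ∈ spectrum ℂ M := by
  rw [spectrum.mem_iff]
  intro hunit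
  rw [Matrix.isUnit_iff_isUnit_det, isUnit_iff_ne_zero] at hunit
  apply hunit
  rw [← Matrix.exists_mulVec_eq_zero_iff]
  refine ⟨z, hz, ?_⟩
  rw [Algebra.algebraMap_eq_smul_one, Matrix.sub_mulVec, Matrix.smul_mulVec,
    Matrix.one_mulVec, h, sub_self]

private lemma exists_eig_of_mem_spectrum {M : Matrix (Fin n) (Fin n) ℂ} {μ : ℂ}
    (h : μ ∈ spectrum ℂ M) : ∃ z, z ≠ 0 ∧ M *ᵥ z = μ • z := by
  rw [spectrum.mem_iff, Matrix.isUnit_iff_isUnit_det, isUnit_iff_ne_zero, not_not,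
    ← Matrix.exists_mulVec_eq_zero_iff] at h
  obtain ⟨z, hz, h0⟩ := h
  refine ⟨z, hz, ?_⟩
  rw [Algebra.algebraMap_eq_smul_one, Matrix.sub_mulVec, Matrix.smul_mulVec,
    Matrix.one_mulVec, sub_eq_zero] at h0
  exact h0.symm

private lemma real_eig_mem {M : Matrix (Fin n) (Fin n) ℝ} {r : ℝ} {v : Fin n → ℝ}
    (hv : v ≠ 0) (h : M *ᵥ v = r • v) :
    (r : ℂ) ∈ spectrum ℂ (M.map (fun a : ℝ => (a : ℂ))) := by
  refine mem_spectrum_of_eig (z := fun i => (v i : ℂ)) ?_ ?_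
  · intro hzz
    apply hv
    funext i
    have h1 := congrFun hzz i
    simpa using h1
  · rw [cmap_mulVec, h]
    funext i
    simp only [Pi.smul_apply, smul_eq_mul]
    push_cast
    rfl

private lemma spectralRadius_le_aux (hn : 0 < n) {M : Matrix (Fin n) (Fin n) ℝ}
    (hM : ∀ i j, 0 ≤ M i j) {x : Fin n → ℝ} (hx : ∀ i, 0 < x i) {r : ℝ}
    (hev : M *ᵥ x = r • x) :
    spectralRadius ℂ (M.map (fun a : ℝ => (a : ℂ))) ≤ ENNReal.ofReal r := by
  show (⨆ k ∈ spectrum ℂ (M.map (fun a : ℝ => (a : ℂ))), (‖k‖₊ : ENNReal)) ≤ _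
  refine iSup₂_le fun μ hμ => ?_
  obtain ⟨z, hz, hzev⟩ := exists_eig_of_mem_spectrum hμ
  obtain ⟨i₀, -, hmax⟩ := Finset.exists_max_image (Finset.univ : Finset (Fin n))
      (fun i => ‖z i‖ / x i) ⟨⟨0, hn⟩, Finset.mem_univ _⟩
  set t := ‖z i₀‖ / x i₀ with hT
  have hzt : ∀ j, ‖z j‖ ≤ t * x j := fun j =>
    (div_le_iff₀ (hx j)).mp (hmax j (Finset.mem_univ j))
  have ht0 : 0 < t := by
    obtain ⟨j, hj⟩ : ∃ j, z j ≠ 0 := by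
      by_contra hc; push_neg at hc; exact hz (funext hc)
    have h1 : 0 < ‖z j‖ / x j := div_pos (norm_pos_iff.mpr hj) (hx j)
    exact lt_of_lt_of_le h1 (hmax j (Finset.mem_univ j))
  have hzi0 : ‖z i₀‖ = t * x i₀ := by
    rw [hT, div_mul_cancel₀ _ (hx i₀).ne']
  have hzpos : 0 < ‖z i₀‖ := by rw [hzi0]; exact mul_pos ht0 (hx i₀)
  have hentry : ((M.map (fun a : ℝ => (a : ℂ))) *ᵥ z) i₀ = ∑ j, (M i₀ j : ℂ) * z j := by
    simp [Matrix.mulVec, dotProduct, Matrix.map_apply]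
  have key : ‖μ‖ * ‖z i₀‖ ≤ r * ‖z i₀‖ := by
    have h1 : ‖μ‖ * ‖z i₀‖ = ‖((M.map (fun a : ℝ => (a : ℂ))) *ᵥ z) i₀‖ := by
      rw [hzev]; simp [norm_mul]
    have h2 : ‖∑ j, (M i₀ j : ℂ) * z j‖ ≤ ∑ j, M i₀ j * ‖z j‖ := by
      refine (norm_sum_le _ _).trans (le_of_eq ?_)
      refine Finset.sum_congr rfl fun j _ => ?_
      rw [norm_mul, Complex.norm_real, Real.norm_eq_abs, abs_of_nonneg (hM i₀ j)]
    have h3 : ∑ j, M i₀ j * ‖z j‖ ≤ ∑ j, M i₀ j * (t * x j) :=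
      Finset.sum_le_sum fun j _ => mul_le_mul_of_nonneg_left (hzt j) (hM i₀ j)
    have h4 : ∑ j, M i₀ j * (t * x j) = r * ‖z i₀‖ := by
      have h5 : ∑ j, M i₀ j * (t * x j) = t * ∑ j, M i₀ j * x j := by
        rw [Finset.mul_sum]; exact Finset.sum_congr rfl fun j _ => by ring
      have h6 : ∑ j, M i₀ j * x j = (M *ᵥ x) i₀ := rfl
      have h7 : (M *ᵥ x) i₀ = r * x i₀ := by rw [hev]; rfl
      rw [h5, h6, h7, hzi0]; ring
    calc ‖μ‖ * ‖z i₀‖ = ‖((M.map (fun a : ℝ => (a : ℂ))) *ᵥ z) i₀‖ := h1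
      _ = ‖∑ j, (M i₀ j : ℂ) * z j‖ := by rw [hentry]
      _ ≤ ∑ j, M i₀ j * ‖z j‖ := h2
      _ ≤ ∑ j, M i₀ j * (t * x j) := h3
      _ = r * ‖z i₀‖ := h4
  have hμr : ‖μ‖ ≤ r := le_of_mul_le_mul_right (by linarith) hzpos
  rw [← enorm_eq_nnnorm, ← ofReal_norm]
  exact ENNReal.ofReal_le_ofReal hμr

private lemma specRad_eq_aux (hn : 0 < n) {M : Matrix (Fin n) (Fin n) ℝ}
    (hM : ∀ i j, 0 ≤ M i j) {x : Fin n → ℝ} (hx : ∀ i, 0 < x i) {r : ℝ} (hr : 0 ≤ r)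
    (hev : M *ᵥ x = r • x) : specRad M = r := by
  have hxne : x ≠ 0 := by
    intro h
    exact (hx ⟨0, hn⟩).ne' (by rw [h]; rfl)
  have hup := spectralRadius_le_aux hn hM hx hev
  have hmem := real_eig_mem hxne hev
  have hlow : ENNReal.ofReal r ≤ spectralRadius ℂ (M.map fun a : ℝ => (a : ℂ)) := by
    have h1 : (‖((r : ℝ) : ℂ)‖₊ : ENNReal) ≤ spectralRadius ℂ (M.map fun a : ℝ => (a : ℂ)) :=
      le_iSup₂ (f := fun k (_ : k ∈ spectrum ℂ (M.map fun a : ℝ => (a : ℂ))) =>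
        (‖k‖₊ : ENNReal)) (r : ℂ) hmem
    rwa [← enorm_eq_nnnorm, ← ofReal_norm, Complex.norm_real, Real.norm_eq_abs,
      abs_of_nonneg hr] at h1
  have hEq : spectralRadius ℂ (M.map fun a : ℝ => (a : ℂ)) = ENNReal.ofReal r :=
    le_antisymm hup hlow
  rw [specRad, hEq, ENNReal.toReal_ofReal hr]

private lemma pow_entry_nonneg {M : Matrix (Fin n) (Fin n) ℝ} (hM : ∀ i j, 0 ≤ M i j) :
    ∀ (k : ℕ) (i j : Fin n), 0 ≤ (M ^ k) i j := by
  intro k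
  induction k with
  | zero =>
    intro i j
    rw [pow_zero]
    by_cases h : i = j <;> simp [Matrix.one_apply, h]
  | succ m ih =>
    intro i j
    rw [pow_succ, Matrix.mul_apply]
    exact Finset.sum_nonneg fun l _ => mul_nonneg (ih i l) (hM l j)

private lemma pow_mulVec_eig {M : Matrix (Fin n) (Fin n) ℝ} {r : ℝ} {w : Fin n → ℝ}
    (h : M *ᵥ w = r • w) : ∀ k : ℕ, (M ^ k) *ᵥ w = r ^ k • w := by
  intro k
  induction k with
  | zero => simp [Matrix.one_mulVec]
  | succ m ih =>
    calc (M ^ (m + 1)) *ᵥ w = (M ^ m) *ᵥ (M *ᵥ w) := by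
          rw [Matrix.mulVec_mulVec, pow_succ]
      _ = (M ^ m) *ᵥ (r • w) := by rw [h]
      _ = r • ((M ^ m) *ᵥ w) := by rw [Matrix.mulVec_smul]
      _ = r • (r ^ m • w) := by rw [ih]
      _ = r ^ (m + 1) • w := by rw [smul_smul, ← pow_succ']

private lemma eig_nonneg_smul (hn : 0 < n) {S : Matrix (Fin n) (Fin n) ℝ}
    (hSnn : ∀ i j, 0 ≤ S i j) (hSirr : Irred S) {ρ : ℝ}
    {x u : Fin n → ℝ} (hx : ∀ i, 0 < x i) (hxev : S *ᵥ x = ρ • x)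
    (hu : ∀ i, 0 ≤ u i) (huev : S *ᵥ u = ρ • u) : ∃ c : ℝ, 0 ≤ c ∧ u = c • x := by
  obtain ⟨i₀, -, hmin⟩ := Finset.exists_min_image (Finset.univ : Finset (Fin n))
      (fun i => u i / x i) ⟨⟨0, hn⟩, Finset.mem_univ _⟩
  set c := u i₀ / x i₀ with hc
  have hc0 : 0 ≤ c := div_nonneg (hu i₀) (hx i₀).le
  set w : Fin n → ℝ := u - c • x with hw
  have hw0 : ∀ i, 0 ≤ w i := by
    intro i
    have h1 : c ≤ u i / x i := hmin i (Finset.mem_univ i)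
    have h2 : c * x i ≤ u i := (le_div_iff₀ (hx i)).mp h1
    simp only [hw, Pi.sub_apply, Pi.smul_apply, smul_eq_mul, sub_nonneg]
    exact h2
  have hwi₀ : w i₀ = 0 := by
    simp only [hw, Pi.sub_apply, Pi.smul_apply, smul_eq_mul, hc]
    rw [div_mul_cancel₀ _ (hx i₀).ne', sub_self]
  have hwev : S *ᵥ w = ρ • w := by
    rw [hw, Matrix.mulVec_sub, Matrix.mulVec_smul, huev, hxev]
    module
  have hwzero : w = 0 := by
    by_contra hne
    obtain ⟨j, hj⟩ : ∃ j, w j ≠ 0 := Function.ne_iff.mp hne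
    have hwj : 0 < w j := lt_of_le_of_ne (hw0 j) (Ne.symm hj)
    obtain ⟨k, hk⟩ := hSirr i₀ j
    have h1 : ((S ^ (k + 1)) *ᵥ w) i₀ = ρ ^ (k + 1) * w i₀ := by
      rw [pow_mulVec_eig hwev]; rfl
    have h2 : ((S ^ (k + 1)) *ᵥ w) i₀ = ∑ l, (S ^ (k + 1)) i₀ l * w l := rfl
    have h3 : (S ^ (k + 1)) i₀ j * w j ≤ ∑ l, (S ^ (k + 1)) i₀ l * w l :=
      Finset.single_le_sum (f := fun l => (S ^ (k + 1)) i₀ l * w l)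
        (fun l _ => mul_nonneg (pow_entry_nonneg hSnn _ i₀ l) (hw0 l)) (Finset.mem_univ j)
    have h4 : 0 < (S ^ (k + 1)) i₀ j * w j := mul_pos hk hwj
    rw [h2] at h1
    rw [hwi₀, mul_zero] at h1
    linarith
  refine ⟨c, hc0, ?_⟩
  have := sub_eq_zero.mp (hw ▸ hwzero)
  exact this.symm ▸ rfl

end LevingerAux


/-- Let `A = S + K` be nonnegative with `S` nonnegative irreducible symmetric
and `K` skew-symmetric, and let `Q` be an orthogonal matrix diagonalizing `S`
with first diagonal entry `ρ(S)` and first column the Perron vector of `S`.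
Then Levinger's function of `A` is constant on `[0,1]` if and only if
`K₁ = QᵀKQ` has zero first row and first column (i.e. `K₁ = [0] ⊕ K₂` for a
skew-symmetric `K₂`). -/
theorem levinger_constant_iff_conjugated_skew_block {n : ℕ} (hn : 0 < n)
    (S K : Matrix (Fin n) (Fin n) ℝ)
    (hSnn : ∀ i j, 0 ≤ S i j) (hSirr : Irred S) (hSsym : Sᵀ = S)
    (hKskew : Kᵀ = -K)
    (hAnn : ∀ i j, 0 ≤ (S + K) i j)
    (Q : Matrix (Fin n) (Fin n) ℝ) (hQ : Qᵀ * Q = 1)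
    (d : Fin n → ℝ) (hdiag : Qᵀ * S * Q = Matrix.diagonal d)
    (hd0 : d ⟨0, hn⟩ = specRad S)
    (x : Fin n → ℝ) (hx : ∀ i, 0 < x i) (hxev : S *ᵥ x = specRad S • x)
    (hQcol : ∀ i, Q i ⟨0, hn⟩ = x i) :
    (∀ s ∈ Set.Icc (0:ℝ) 1, ∀ t ∈ Set.Icc (0:ℝ) 1,
        specRad ((1 - s) • (S + K) + s • (S + K)ᵀ) =
          specRad ((1 - t) • (S + K) + t • (S + K)ᵀ)) ↔
      (∀ j : Fin n, (Qᵀ * K * Q) ⟨0, hn⟩ j = 0 ∧ (Qᵀ * K * Q) j ⟨0, hn⟩ = 0) := by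
  classical
  have hρ0 : 0 ≤ specRad S := ENNReal.toReal_nonneg
  have hQQT : Q * Qᵀ = 1 := mul_eq_one_comm.mp hQ
  have hSK : (S + K)ᵀ = S - K := by
    rw [Matrix.transpose_add, hSsym, hKskew, sub_eq_add_neg]
  have hKentry : ∀ i j : Fin n, K i j = -K j i := by
    intro i j
    have h1 := congrFun (congrFun hKskew j) i
    simpa [Matrix.transpose_apply] using h1
  have hSentry : ∀ i j : Fin n, S i j = S j i := by
    intro i j
    have h1 := congrFun (congrFun hSsym j) i
    simpa [Matrix.transpose_apply] using h1
  have hATnn : ∀ i j, 0 ≤ (S - K) i j := by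
    intro i j
    have h1 := hAnn j i
    simp only [Matrix.add_apply, Matrix.sub_apply] at h1 ⊢
    rw [hSentry i j, hKentry i j]
    linarith
  -- entry identities for the first row/column of QᵀKQ
  have hcolE : ∀ j : Fin n, (Qᵀ * K * Q) j ⟨0, hn⟩ = (Qᵀ *ᵥ (K *ᵥ x)) j := by
    intro j
    rw [Matrix.mulVec_mulVec, Matrix.mul_apply]
    simp only [hQcol]
    rfl
  have hrowE : ∀ j : Fin n, (Qᵀ * K * Q) ⟨0, hn⟩ j = ((x ᵥ* K) ᵥ* Q) j := by
    intro j
    rw [Matrix.vecMul_vecMul, Matrix.mul_assoc, Matrix.mul_apply]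
    simp only [Matrix.transpose_apply, hQcol]
    rfl
  have hxvK : x ᵥ* K = Kᵀ *ᵥ x := (Matrix.mulVec_transpose K x).symm
  constructor
  · -- forward direction
    intro hcon
    -- Levinger at 0 and 1/2
    have hM0 : (1 - (0:ℝ)) • (S + K) + (0:ℝ) • (S + K)ᵀ = S + K := by
      norm_num
    have hMhalf : (1 - (1/2:ℝ)) • (S + K) + (1/2:ℝ) • (S + K)ᵀ = S := by
      rw [hSK]
      norm_num
      module
    have hA : specRad (S + K) = specRad S := by
      have h1 := hcon 0 ⟨le_refl 0, zero_le_one⟩ (1/2) ⟨by norm_num, by norm_num⟩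
      rwa [hM0, hMhalf] at h1
    -- facts about Q and d
    have hSQ : S * Q = Q * Matrix.diagonal d := by
      have h := congrArg (fun M => Q * M) hdiag
      simpa [← Matrix.mul_assoc, hQQT, Matrix.one_mul] using h
    have hcol : ∀ i : Fin n, S *ᵥ (fun l => Q l i) = d i • (fun l => Q l i) := by
      intro i
      funext l
      have h1 : (S * Q) l i = (Q * Matrix.diagonal d) l i := by rw [hSQ]
      rw [Matrix.mul_apply, Matrix.mul_diagonal] at h1
      simpa [Matrix.mulVec, dotProduct, Pi.smul_apply, smul_eq_mul, mul_comm] using h1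
    have hcolne : ∀ i : Fin n, (fun l => Q l i) ≠ 0 := by
      intro i hcoleq
      have h1 : (Qᵀ * Q) i i = 0 := by
        rw [Matrix.mul_apply]
        refine Finset.sum_eq_zero fun l _ => ?_
        have h2 : Q l i = 0 := congrFun hcoleq l
        simp [Matrix.transpose_apply, h2]
      rw [hQ] at h1
      simp [Matrix.one_apply] at h1
    have hdle : ∀ i, d i ≤ specRad S := by
      intro i
      have hmem := real_eig_mem (hcolne i) (hcol i)
      have hup := spectralRadius_le_aux hn hSnn hx hxev
      have h1 : (‖((d i : ℝ) : ℂ)‖₊ : ENNReal) ≤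
          spectralRadius ℂ (S.map fun a : ℝ => (a : ℂ)) :=
        le_iSup₂ (f := fun k (_ : k ∈ spectrum ℂ (S.map fun a : ℝ => (a : ℂ))) =>
          (‖k‖₊ : ENNReal)) ((d i : ℝ) : ℂ) hmem
      have h2 : (‖((d i : ℝ) : ℂ)‖₊ : ENNReal) ≤ ENNReal.ofReal (specRad S) := h1.trans hup
      have h3 : |d i| ≤ specRad S := by
        have h4 := ENNReal.toReal_mono (by simp) h2
        simpa [ENNReal.toReal_ofReal hρ0, Real.norm_eq_abs] using h4
      exact le_trans (le_abs_self _) h3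
    -- Rayleigh quotient bound and equality case
    have rayleigh : ∀ u : Fin n → ℝ, u ⬝ᵥ (S *ᵥ u) ≤ specRad S * (u ⬝ᵥ u) ∧
        (u ⬝ᵥ (S *ᵥ u) = specRad S * (u ⬝ᵥ u) → S *ᵥ u = specRad S • u) := by
      intro u
      set w : Fin n → ℝ := Qᵀ *ᵥ u with hwdef
      have hSfac : S = Q * Matrix.diagonal d * Qᵀ := by
        calc S = S * (Q * Qᵀ) := by rw [hQQT, Matrix.mul_one]
          _ = (S * Q) * Qᵀ := by rw [Matrix.mul_assoc]
          _ = Q * Matrix.diagonal d * Qᵀ := by rw [hSQ]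
      have hDw : Matrix.diagonal d *ᵥ w = fun i => d i * w i := by
        funext i; rw [Matrix.mulVec_diagonal]
      have hSu : S *ᵥ u = Q *ᵥ (fun i => d i * w i) := by
        rw [← hDw, hwdef, Matrix.mulVec_mulVec, Matrix.mulVec_mulVec, ← hSfac]
      have hQw : Q *ᵥ w = u := by
        rw [hwdef, Matrix.mulVec_mulVec, hQQT, Matrix.one_mulVec]
      have hdot : ∀ y : Fin n → ℝ, u ⬝ᵥ (Q *ᵥ y) = w ⬝ᵥ y := by
        intro y
        rw [dotProduct_mulVec, ← Matrix.mulVec_transpose]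
      have e1 : u ⬝ᵥ (S *ᵥ u) = ∑ i, d i * (w i * w i) := by
        rw [hSu, hdot]
        exact Finset.sum_congr rfl fun i _ => by ring
      have e2 : u ⬝ᵥ u = ∑ i, w i * w i := by
        have h1 : u ⬝ᵥ (Q *ᵥ w) = w ⬝ᵥ w := hdot w
        rw [hQw] at h1
        rw [h1]
        rfl
      constructor
      · rw [e1, e2, Finset.mul_sum]
        exact Finset.sum_le_sum fun i _ =>
          mul_le_mul_of_nonneg_right (hdle i) (mul_self_nonneg _)
      · intro heq
        have hsum : ∑ i, (specRad S - d i) * (w i * w i) = 0 := by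
          have h1 : ∑ i, d i * (w i * w i) = ∑ i, specRad S * (w i * w i) := by
            rw [← e1, heq, e2, Finset.mul_sum]
          have h2 : ∑ i, ((specRad S - d i) * (w i * w i)) =
              ∑ i, (specRad S * (w i * w i)) - ∑ i, (d i * (w i * w i)) := by
            rw [← Finset.sum_sub_distrib]
            exact Finset.sum_congr rfl fun i _ => by ring
          rw [h2, ← h1, sub_self]
        have hterm := (Finset.sum_eq_zero_iff_of_nonneg
          (fun i _ => mul_nonneg (sub_nonneg.mpr (hdle i)) (mul_self_nonneg (w i)))).mp hsum
        have hdw : ∀ i, d i * w i = specRad S * w i := by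
          intro i
          rcases mul_eq_zero.mp (hterm i (Finset.mem_univ i)) with h | h
          · rw [sub_eq_zero.mp h]
          · rw [mul_self_eq_zero.mp h, mul_zero, mul_zero]
        rw [hSu]
        have h3 : (fun i => d i * w i) = fun i => specRad S * w i := funext hdw
        rw [h3]
        have h4 : (fun i => specRad S * w i) = specRad S • w := rfl
        rw [h4, Matrix.mulVec_smul, hQw]
    -- Banach algebra setup for existence of a maximizing eigenvalue
    letI : NormedRing (Matrix (Fin n) (Fin n) ℂ) := Matrix.linftyOpNormedRing
    letI : NormedAlgebra ℂ (Matrix (Fin n) (Fin n) ℂ) := Matrix.linftyOpNormedAlgebra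
    haveI : Nonempty (Fin n) := ⟨⟨0, hn⟩⟩
    haveI : Nontrivial (Matrix (Fin n) (Fin n) ℂ) :=
      inferInstanceAs (Nontrivial (Fin n → Fin n → ℂ))
    haveI : CompleteSpace (Matrix (Fin n) (Fin n) ℂ) :=
      FiniteDimensional.complete ℂ _
    obtain ⟨μ, hμmem, hμrad⟩ := spectrum.exists_nnnorm_eq_spectralRadius
      (a := (S + K).map (fun a : ℝ => (a : ℂ)))
    obtain ⟨z, hz, hzev⟩ := exists_eig_of_mem_spectrum hμmem
    have hμabs : ‖μ‖ = specRad S := by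
      have h1 : specRad (S + K) = ‖μ‖ := by
        rw [specRad, ← hμrad]
        simp
      rw [← h1, hA]
    set u : Fin n → ℝ := fun i => ‖z i‖ with hu
    have hu0 : ∀ i, 0 ≤ u i := fun i => norm_nonneg _
    have hune : u ≠ 0 := by
      intro h0
      apply hz
      funext i
      have h1 : u i = 0 := congrFun h0 i
      exact norm_eq_zero.mp h1
    have hAu : ∀ i, specRad S * u i ≤ ((S + K) *ᵥ u) i := by
      intro i
      have hentry : (((S + K).map (fun a : ℝ => (a : ℂ))) *ᵥ z) i =
          ∑ j, ((S + K) i j : ℂ) * z j := by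
        simp [Matrix.mulVec, dotProduct, Matrix.map_apply]
      have h1 : specRad S * u i = ‖μ * z i‖ := by
        rw [norm_mul, hμabs]
      have h2 : μ * z i = (((S + K).map (fun a : ℝ => (a : ℂ))) *ᵥ z) i := by
        rw [hzev]; rfl
      have h3 : ‖∑ j, ((S + K) i j : ℂ) * z j‖ ≤ ∑ j, (S + K) i j * u j := by
        refine (norm_sum_le _ _).trans (le_of_eq ?_)
        refine Finset.sum_congr rfl fun j _ => ?_
        rw [norm_mul, Complex.norm_real, Real.norm_eq_abs, abs_of_nonneg (hAnn i j)]
      have h4 : ∑ j, (S + K) i j * u j = ((S + K) *ᵥ u) i := rfl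
      rw [h1, h2, hentry]
      rw [← h4]
      exact h3
    have hKuu : u ⬝ᵥ (K *ᵥ u) = 0 := by
      have h1 : u ⬝ᵥ (K *ᵥ u) = (Kᵀ *ᵥ u) ⬝ᵥ u := by
        rw [dotProduct_mulVec, ← Matrix.mulVec_transpose]
      have h2 : (Kᵀ *ᵥ u) ⬝ᵥ u = -(u ⬝ᵥ (K *ᵥ u)) := by
        rw [hKskew, Matrix.neg_mulVec, neg_dotProduct, dotProduct_comm]
      rw [h2] at h1
      linarith
    have hdot1 : specRad S * (u ⬝ᵥ u) ≤ u ⬝ᵥ ((S + K) *ᵥ u) := by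
      show specRad S * (u ⬝ᵥ u) ≤ ∑ i, u i * ((S + K) *ᵥ u) i
      have h1 : u ⬝ᵥ u = ∑ i, u i * u i := rfl
      rw [h1, Finset.mul_sum]
      refine Finset.sum_le_sum fun i _ => ?_
      calc specRad S * (u i * u i) = u i * (specRad S * u i) := by ring
        _ ≤ u i * ((S + K) *ᵥ u) i := mul_le_mul_of_nonneg_left (hAu i) (hu0 i)
    have hdS : u ⬝ᵥ (S *ᵥ u) = u ⬝ᵥ ((S + K) *ᵥ u) := by
      rw [Matrix.add_mulVec, dotProduct_add, hKuu, add_zero]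
    have hray := rayleigh u
    have heq : u ⬝ᵥ (S *ᵥ u) = specRad S * (u ⬝ᵥ u) :=
      le_antisymm hray.1 (by rw [hdS]; exact hdot1)
    have hSu : S *ᵥ u = specRad S • u := hray.2 heq
    obtain ⟨c, hc0, hcu⟩ := eig_nonneg_smul hn hSnn hSirr hx hxev hu0 hSu
    have hcpos : 0 < c := by
      rcases hc0.lt_or_eq with h | h
      · exact h
      · exfalso
        apply hune
        rw [hcu, ← h, zero_smul]
    have hupos : ∀ i, 0 < u i := by
      intro i
      have h1 : u i = c * x i := by rw [hcu]; rfl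
      rw [h1]
      exact mul_pos hcpos (hx i)
    have hKu0 : ∀ i, 0 ≤ (K *ᵥ u) i := by
      intro i
      have h1 := hAu i
      have h2 : ((S + K) *ᵥ u) i = specRad S * u i + (K *ᵥ u) i := by
        rw [Matrix.add_mulVec]
        have h3 : (S *ᵥ u) i = specRad S * u i := by rw [hSu]; rfl
        simp [Pi.add_apply, h3]
      linarith
    have hKuzero : K *ᵥ u = 0 := by
      funext i
      have hsum : ∑ j, u j * (K *ᵥ u) j = 0 := hKuu
      have h1 := (Finset.sum_eq_zero_iff_of_nonneg
        (fun j _ => mul_nonneg (hu0 j) (hKu0 j))).mp hsum i (Finset.mem_univ i)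
      rcases mul_eq_zero.mp h1 with h | h
      · exact absurd h (hupos i).ne'
      · exact h
    have hKx : K *ᵥ x = 0 := by
      have h1 : K *ᵥ (c • x) = 0 := by rw [← hcu]; exact hKuzero
      rw [Matrix.mulVec_smul] at h1
      rcases smul_eq_zero.mp h1 with h | h
      · exact absurd h hcpos.ne'
      · exact h
    have hxK : x ᵥ* K = 0 := by
      rw [hxvK, hKskew, Matrix.neg_mulVec, hKx, neg_zero]
    intro j
    constructor
    · rw [hrowE j, hxK, Matrix.zero_vecMul]
      rfl
    · rw [hcolE j, hKx, Matrix.mulVec_zero]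
      rfl
  · -- reverse direction
    intro hblock s hs t ht
    have hKx : K *ᵥ x = 0 := by
      have hcols : Qᵀ *ᵥ (K *ᵥ x) = 0 := by
        funext j
        have h1 := (hblock j).2
        rw [hcolE j] at h1
        exact h1
      have h2 : Q *ᵥ (Qᵀ *ᵥ (K *ᵥ x)) = 0 := by rw [hcols, Matrix.mulVec_zero]
      rwa [Matrix.mulVec_mulVec, hQQT, Matrix.one_mulVec] at h2
    have key : ∀ r : ℝ, r ∈ Set.Icc (0:ℝ) 1 →
        specRad ((1 - r) • (S + K) + r • (S + K)ᵀ) = specRad S := by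
      intro r hr
      have hr1 : 0 ≤ 1 - r := by linarith [hr.2]
      refine specRad_eq_aux hn ?_ hx hρ0 ?_
      · intro i j
        have h1 := hAnn i j
        have h2 := hATnn i j
        rw [hSK]
        simp only [Matrix.add_apply, Matrix.sub_apply, Matrix.smul_apply, smul_eq_mul] at h1 h2 ⊢
        nlinarith [mul_nonneg hr1 h1, mul_nonneg hr.1 h2]
      · rw [hSK, Matrix.add_mulVec, Matrix.smul_mulVec, Matrix.smul_mulVec,
          Matrix.add_mulVec, Matrix.sub_mulVec, hxev, hKx]
        rw [add_zero, sub_zero, smul_smul, smul_smul, ← add_smul]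
        congr 1
        ring
    rw [key s hs, key t ht]
end
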